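/- For the Möbius space Z = {z ∈ ℂ² : |z₁| > |z₂|} with coherent product K(z,z') = (conj(z₁)z₁' − conj(z₂)z₂')^{-1}, every matrix A ∈ ℂ^{2×2} satisfying α := |A₁₁|² − |A₂₁|² > 0, |β| ≤ α, and γ ≤ α − 2|β| (where β := conj(A₁₁)A₁₂ − conj(A₂₁)A₂₂ and γ := |A₂₂|² − |A₁₂|²) maps Z into itself and is a coherent map, with adjoint A^σ given by (A^σ)₁₁ = conj(A₁₁), (A^σ)₁₂ = −conj(A₂₁), (A^σ)₂₁ = −conj(A₁₂), (A^σ)₂₂ = conj(A₂₂). -/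

import Mathlib

open scoped ComplexConjugate

/-- The coherent product of the Möbius space `Z = {z ∈ ℂ² : |z₁| > |z₂|}`. -/
noncomputable def mobiusK (z z' : ℂ × ℂ) : ℂ :=
  (conj z.1 * z'.1 - conj z.2 * z'.2)⁻¹

/-- Action of a `2×2` complex matrix on points of `ℂ²`. -/
def mobiusAct (A : Matrix (Fin 2) (Fin 2) ℂ) (z : ℂ × ℂ) : ℂ × ℂ :=
  (A 0 0 * z.1 + A 0 1 * z.2, A 1 0 * z.1 + A 1 1 * z.2)

/-- The adjoint matrix `A^σ` for the Möbius space. -/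
noncomputable def mobiusAdj (A : Matrix (Fin 2) (Fin 2) ℂ) : Matrix (Fin 2) (Fin 2) ℂ :=
  Matrix.of ![![conj (A 0 0), -conj (A 1 0)], ![-conj (A 0 1), conj (A 1 1)]]

/-- Every matrix `A` with `α := |A₁₁|² − |A₂₁|² > 0`, `|β| ≤ α`, `γ ≤ α − 2|β|`
(where `β := conj(A₁₁)A₁₂ − conj(A₂₁)A₂₂`, `γ := |A₂₂|² − |A₁₂|²`) maps the Möbius space
into itself and is a coherent map, with adjoint `A^σ`. -/
theorem mobius_matrix_coherent
    (A : Matrix (Fin 2) (Fin 2) ℂ)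
    (hα : 0 < ‖A 0 0‖ ^ 2 - ‖A 1 0‖ ^ 2)
    (hβ : ‖conj (A 0 0) * A 0 1 - conj (A 1 0) * A 1 1‖ ≤
      ‖A 0 0‖ ^ 2 - ‖A 1 0‖ ^ 2)
    (hγ : ‖A 1 1‖ ^ 2 - ‖A 0 1‖ ^ 2 ≤
      (‖A 0 0‖ ^ 2 - ‖A 1 0‖ ^ 2) -
        2 * ‖conj (A 0 0) * A 0 1 - conj (A 1 0) * A 1 1‖) :
    (∀ z : ℂ × ℂ, ‖z.2‖ < ‖z.1‖ →
      ‖(mobiusAct A z).2‖ < ‖(mobiusAct A z).1‖) ∧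
    (∀ z z' : ℂ × ℂ, ‖z.2‖ < ‖z.1‖ → ‖z'.2‖ < ‖z'.1‖ →
      mobiusK (mobiusAct A z) z' = mobiusK z (mobiusAct (mobiusAdj A) z')) := by
  set a := A 0 0 with ha
  set b := A 0 1 with hb
  set c := A 1 0 with hc
  set d := A 1 1 with hd
  set β : ℂ := conj a * b - conj c * d with hβdef
  constructor
  · intro z hz
    have hr : (0:ℝ) ≤ ‖z.1‖ := norm_nonneg _
    have hs : (0:ℝ) ≤ ‖z.2‖ := norm_nonneg _
    simp only [mobiusAct]
    have e1 : Complex.normSq (a * z.1 + b * z.2) =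
        Complex.normSq a * Complex.normSq z.1 + Complex.normSq b * Complex.normSq z.2 +
          2 * (a * z.1 * conj (b * z.2)).re := by
      rw [Complex.normSq_add, Complex.normSq_mul, Complex.normSq_mul]
    have e2 : Complex.normSq (c * z.1 + d * z.2) =
        Complex.normSq c * Complex.normSq z.1 + Complex.normSq d * Complex.normSq z.2 +
          2 * (c * z.1 * conj (d * z.2)).re := by
      rw [Complex.normSq_add, Complex.normSq_mul, Complex.normSq_mul]
    have hre : (c * z.1 * conj (d * z.2)).re - (a * z.1 * conj (b * z.2)).re ≤
        ‖β‖ * ‖z.1‖ * ‖z.2‖ := by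
      have hid : c * z.1 * conj (d * z.2) - a * z.1 * conj (b * z.2) =
          z.1 * conj z.2 * conj (-β) := by
        simp only [hβdef, map_mul, map_sub, map_neg, Complex.conj_conj]
        ring
      calc (c * z.1 * conj (d * z.2)).re - (a * z.1 * conj (b * z.2)).re
          = (c * z.1 * conj (d * z.2) - a * z.1 * conj (b * z.2)).re := by
            simp [Complex.sub_re]
        _ ≤ ‖c * z.1 * conj (d * z.2) - a * z.1 * conj (b * z.2)‖ :=
            Complex.re_le_norm _
        _ = ‖z.1‖ * ‖z.2‖ * ‖β‖ := by
            rw [hid]; simp [map_mul]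
        _ = ‖β‖ * ‖z.1‖ * ‖z.2‖ := by ring
    have key : Complex.normSq (c * z.1 + d * z.2) < Complex.normSq (a * z.1 + b * z.2) := by
      rw [e1, e2]
      have h1 : Complex.normSq a = ‖a‖ ^ 2 := (Complex.sq_norm a).symm
      have h2 : Complex.normSq b = ‖b‖ ^ 2 := (Complex.sq_norm b).symm
      have h3 : Complex.normSq c = ‖c‖ ^ 2 := (Complex.sq_norm c).symm
      have h4 : Complex.normSq d = ‖d‖ ^ 2 := (Complex.sq_norm d).symm
      have h5 : Complex.normSq z.1 = ‖z.1‖ ^ 2 := (Complex.sq_norm z.1).symm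
      have h6 : Complex.normSq z.2 = ‖z.2‖ ^ 2 := (Complex.sq_norm z.2).symm
      rw [h1, h2, h3, h4, h5, h6]
      nlinarith [mul_pos (sub_pos.2 hz) hα, mul_nonneg (sub_nonneg.2 hβ) hs,
        mul_nonneg (mul_nonneg (sub_nonneg.2 hβ) hs) (sub_pos.2 hz).le,
        mul_nonneg hr hs, sq_nonneg (‖z.1‖ - ‖z.2‖),
        mul_pos hα (mul_pos (lt_of_le_of_lt hs hz) (lt_of_le_of_lt hs hz))]
    have key2 : ‖c * z.1 + d * z.2‖ ^ 2 < ‖a * z.1 + b * z.2‖ ^ 2 := by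
      rw [Complex.sq_norm, Complex.sq_norm]; exact key
    exact lt_of_pow_lt_pow_left₀ 2 (norm_nonneg _) key2
  · intro z z' _ _
    unfold mobiusK mobiusAct mobiusAdj
    congr 1
    simp only [Matrix.of_apply, Matrix.cons_val', Matrix.cons_val_zero, Matrix.empty_val',
      Matrix.cons_val_fin_one, Matrix.cons_val_one, Matrix.head_cons, Matrix.head_fin_const,
      map_add, map_mul, map_neg, Complex.conj_conj]
    ring
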